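/- Let f : ℝ^d → ℝ^d be measurable and locally bounded, and let G : ℝ^d → (subsets of ℝ^d) be a set-valued map with closed convex values and closed graph (upper semicontinuity) such that f(x) ∈ G(x) for Lebesgue-almost every x ∈ ℝ^d. Then F_f(x) ⊆ G(x) for every x ∈ ℝ^d. That is, F_f is the smallest closed-convex-valued upper semicontinuous set-valued map containing f(x) at almost every point. -/
import Mathlib


open MeasureTheory Filter Topology Metric Set
open scoped RealInnerProductSpace

noncomputable section

abbrev Euc (d : ℕ) := EuclideanSpace ℝ (Fin d)

/-- `f` is locally bounded. -/
def LocallyBounded {d : ℕ} (f : Euc d → Euc d) : Prop :=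
  ∀ x : Euc d, ∃ r > 0, ∃ C, ∀ y, ‖y - x‖ < r → ‖f y‖ ≤ C

/-- Filippov set-valued map: intersection over Lebesgue-null sets `N` and radii `δ > 0`
of the closed convex hull of `{f y : ‖y - x‖ < δ, y ∉ N}`. -/
def Filippov {d : ℕ} (f : Euc d → Euc d) (x : Euc d) : Set (Euc d) :=
  ⋂ (N : Set (Euc d)) (_ : volume N = 0) (δ : ℝ) (_ : 0 < δ),
    closure (convexHull ℝ (f '' {y | ‖y - x‖ < δ ∧ y ∉ N}))

/-- Krasovskii set-valued map: intersection over radii `δ > 0` of the closed convex hull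
of `{f y : ‖y - x‖ < δ}`. -/
def Krasovskii {d : ℕ} (f : Euc d → Euc d) (x : Euc d) : Set (Euc d) :=
  ⋂ (δ : ℝ) (_ : 0 < δ), closure (convexHull ℝ (f '' {y | ‖y - x‖ < δ}))

/-- `F_f` is the smallest closed-convex-valued u.s.c. map containing `f x`
at a.e. point. -/
theorem stmt_3 {d : ℕ} (f : Euc d → Euc d) (hf_meas : Measurable f)
    (hf_bdd : LocallyBounded f) (G : Euc d → Set (Euc d))
    (hG_closed : ∀ x, IsClosed (G x)) (hG_convex : ∀ x, Convex ℝ (G x))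
    (hG_graph : IsClosed {p : Euc d × Euc d | p.2 ∈ G p.1})
    (hfG : ∀ᵐ x ∂(volume : Measure (Euc d)), f x ∈ G x) :
    ∀ x, Filippov f x ⊆ G x := by
  intro x v hv
  set N : Set (Euc d) := {y | f y ∉ G y} with hNdef
  have hN : volume N = 0 := ae_iff.mp hfG
  have key : ∀ ε > 0, v ∈ cthickening ε (G x) := by
    intro ε hε
    obtain ⟨r, hr, C, hC⟩ := hf_bdd x
    have claim : ∃ δ > 0, ∀ y, ‖y - x‖ < δ → y ∉ N → f y ∈ thickening ε (G x) := by
      by_contra h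
      push_neg at h
      choose y hy1 hy2 hy3 using fun n : ℕ =>
        h (min r (1 / (n + 1))) (lt_min hr (by positivity))
      have hyr : ∀ n, ‖y n - x‖ < r := fun n => (hy1 n).trans_le (min_le_left _ _)
      have hbdd : ∀ n, f (y n) ∈ closedBall (0 : Euc d) C := fun n => by
        simpa [mem_closedBall, dist_eq_norm] using hC _ (hyr n)
      obtain ⟨w, hw, φ, hφ, hφt⟩ :=
        (isCompact_closedBall (0 : Euc d) C).tendsto_subseq hbdd
      have hyx0 : Tendsto y atTop (𝓝 x) := by
        rw [tendsto_iff_norm_sub_tendsto_zero]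
        apply squeeze_zero (fun n => norm_nonneg _)
          (fun n => ((hy1 n).trans_le (min_le_right _ _)).le)
        exact tendsto_one_div_add_atTop_nhds_zero_nat
      have hyx : Tendsto (fun n => y (φ n)) atTop (𝓝 x) :=
        hyx0.comp hφ.tendsto_atTop
      have hwG : w ∈ G x := by
        have := hG_graph.mem_of_tendsto (hyx.prodMk_nhds hφt)
          (Eventually.of_forall fun n => not_not.mp (hy2 (φ n)))
        exact this
      have hev : ∀ᶠ n in atTop, f (y (φ n)) ∈ thickening ε (G x) := by
        filter_upwards [hφt.eventually (Metric.ball_mem_nhds w hε)] with n hn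
        exact Metric.mem_thickening_iff.2 ⟨w, hwG, hn⟩
      obtain ⟨n, hn⟩ := hev.exists
      exact hy3 (φ n) hn
    obtain ⟨δ, hδ, hsub⟩ := claim
    have hmem : v ∈ closure (convexHull ℝ (f '' {y | ‖y - x‖ < δ ∧ y ∉ N})) := by
      simp only [Filippov, mem_iInter] at hv
      exact hv N hN δ hδ
    have h1 : f '' {y | ‖y - x‖ < δ ∧ y ∉ N} ⊆ thickening ε (G x) := by
      rintro _ ⟨y, ⟨hy1, hy2⟩, rfl⟩
      exact hsub y hy1 hy2
    have h2 : convexHull ℝ (f '' {y | ‖y - x‖ < δ ∧ y ∉ N}) ⊆ thickening ε (G x) :=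
      convexHull_min h1 ((hG_convex x).thickening ε)
    exact closure_minimal (h2.trans (thickening_subset_cthickening ε _))
      (isClosed_cthickening) hmem
  have hcl : v ∈ closure (G x) := by
    rw [Metric.closure_eq_iInter_cthickening]
    exact mem_iInter₂.2 fun δ hδ => key δ hδ
  rwa [(hG_closed x).closure_eq] at hcl
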